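/- In the parallel-link Physarum dynamics with lengths L₁ < L₂ < … < Lₘ and all Dᵢ(0) > 0, the fraction x₁ = D₁/(Σᵢ Dᵢ) converges to 1 as t → ∞; hence D₁ → 1 and Dᵢ → 0 for i ≥ 2. -/

import Mathlib

open Real Finset Filter

/-- In the parallel-link Physarum dynamics (`Dᵢ' = Qᵢ - Dᵢ`, `Qᵢ = Dᵢ·Δ/Lᵢ`,
`Δ = 1/Σⱼ Dⱼ/Lⱼ`) with strictly increasing positive lengths and all
`Dᵢ(0) > 0`, the fraction `x₁ = D₁/Σᵢ Dᵢ` converges to `1`; hence `D₁ → 1`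
and `Dᵢ → 0` for `i ≥ 2`. -/
theorem parallel_links_convergence (m : ℕ) (L : Fin (m + 1) → ℝ)
    (hL : ∀ i, 0 < L i) (hLmono : StrictMono L)
    (D : ℝ → Fin (m + 1) → ℝ) (hD0 : ∀ i, 0 < D 0 i)
    (hdyn : ∀ t i, 0 ≤ t → HasDerivAt (fun s => D s i)
      (D t i * (∑ j, D t j / L j)⁻¹ / L i - D t i) t) :
    Tendsto (fun t => D t 0 / ∑ i, D t i) atTop (nhds 1) ∧
    Tendsto (fun t => D t 0) atTop (nhds 1) ∧
    ∀ i, i ≠ 0 → Tendsto (fun t => D t i) atTop (nhds 0) := by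
  have hcont : ∀ i t, 0 ≤ t → ContinuousAt (fun s => D s i) t :=
    fun i t ht => (hdyn t i ht).continuousAt
  -- Step 1 : positivity of all D t i for t ≥ 0
  have hpos : ∀ t, 0 ≤ t → ∀ i, 0 < D t i := by
    by_contra hcon
    push_neg at hcon
    obtain ⟨t₀, ht₀, i₀, hi₀⟩ := hcon
    set C : Set ℝ := {t | 0 ≤ t ∧ ∃ i, D t i ≤ 0} with hCdef
    have hCne : C.Nonempty := ⟨t₀, ht₀, i₀, hi₀⟩
    have hCbdd : BddBelow C := ⟨0, fun x hx => hx.1⟩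
    have hCclosed : IsClosed C := by
      apply IsSeqClosed.isClosed
      intro x u hx hu
      have hu0 : 0 ≤ u := ge_of_tendsto' hu (fun n => (hx n).1)
      refine ⟨hu0, ?_⟩
      by_contra hno
      push_neg at hno
      have hev : ∀ᶠ n in atTop, ∀ i, 0 < D (x n) i := by
        rw [Filter.eventually_all]
        intro i
        have hc : Tendsto (fun n => D (x n) i) atTop (nhds (D u i)) :=
          (hcont i u hu0).tendsto.comp hu
        exact hc.eventually (eventually_gt_nhds (hno i))
      obtain ⟨n, hn⟩ := hev.exists
      obtain ⟨i, hi⟩ := (hx n).2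
      exact absurd hi (not_le.mpr (hn i))
    have hTmem : sInf C ∈ C := hCclosed.csInf_mem hCne hCbdd
    set T := sInf C with hTdef
    have hT0 : 0 ≤ T := hTmem.1
    have h0notC : (0 : ℝ) ∉ C := by
      rintro ⟨-, i, hi⟩
      exact absurd hi (not_le.mpr (hD0 i))
    have hTpos : 0 < T := by
      rcases lt_or_eq_of_le hT0 with h | h
      · exact h
      · exact absurd (h ▸ hTmem) h0notC
    have hmid : ∀ s, 0 ≤ s → s < T → ∀ i, 0 < D s i := by
      intro s hs hsT i
      by_contra hle
      push_neg at hle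
      exact absurd (csInf_le hCbdd ⟨hs, i, hle⟩) (not_le.mpr hsT)
    have key : ∀ i, MonotoneOn (fun s => D s i * Real.exp s) (Set.Icc 0 T) := by
      intro i
      apply monotoneOn_of_deriv_nonneg (convex_Icc 0 T)
      · intro s hs
        exact ((hcont i s hs.1).mul Real.continuous_exp.continuousAt).continuousWithinAt
      · intro s hs
        rw [interior_Icc] at hs
        exact ((hdyn s i hs.1.le).mul (Real.hasDerivAt_exp s)).differentiableAt.differentiableWithinAt
      · intro s hs
        rw [interior_Icc] at hs
        have hd := (hdyn s i hs.1.le).fun_mul (Real.hasDerivAt_exp s)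
        rw [hd.deriv]
        have hSpos : 0 < ∑ j, D s j / L j :=
          Finset.sum_pos (fun j _ => div_pos (hmid s hs.1.le hs.2 j) (hL j)) Finset.univ_nonempty
        have heq : (D s i * (∑ j, D s j / L j)⁻¹ / L i - D s i) * Real.exp s
            + D s i * Real.exp s
            = D s i * (∑ j, D s j / L j)⁻¹ / L i * Real.exp s := by ring
        rw [heq]
        have hDpos := hmid s hs.1.le hs.2 i
        exact mul_nonneg (div_nonneg (mul_nonneg hDpos.le (inv_nonneg.mpr hSpos.le))
          (hL i).le) (Real.exp_pos s).le
    obtain ⟨i, hi⟩ := hTmem.2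
    have hmono := key i (Set.left_mem_Icc.mpr hT0) (Set.right_mem_Icc.mpr hT0) hT0
    simp only [Real.exp_zero, mul_one] at hmono
    nlinarith [Real.exp_pos T, hD0 i]
  -- basic positivity consequences
  have hSpos : ∀ t, 0 ≤ t → 0 < ∑ j, D t j / L j := fun t ht =>
    Finset.sum_pos (fun j _ => div_pos (hpos t ht j) (hL j)) Finset.univ_nonempty
  have hWpos : ∀ t, 0 ≤ t → 0 < ∑ i, D t i := fun t ht =>
    Finset.sum_pos (fun i _ => hpos t ht i) Finset.univ_nonempty
  -- Step 2 : dynamics of the sum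
  have hWderiv : ∀ t, 0 ≤ t → HasDerivAt (fun s => ∑ i, D s i) (1 - ∑ i, D t i) t := by
    intro t ht
    have h := HasDerivAt.fun_sum (fun i (_ : i ∈ Finset.univ) => hdyn t i ht)
    have heq : ∑ i, (D t i * (∑ j, D t j / L j)⁻¹ / L i - D t i) = 1 - ∑ i, D t i := by
      rw [Finset.sum_sub_distrib]
      congr 1
      have : ∑ i, D t i * (∑ j, D t j / L j)⁻¹ / L i
          = (∑ j, D t j / L j)⁻¹ * ∑ i, D t i / L i := by
        rw [Finset.mul_sum]
        exact Finset.sum_congr rfl (fun i _ => by ring)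
      rw [this, inv_mul_cancel₀ (hSpos t ht).ne']
    rw [heq] at h
    exact h
  have hWeq : ∀ t, 0 ≤ t → (∑ i, D t i) = 1 + ((∑ i, D 0 i) - 1) * Real.exp (-t) := by
    intro t ht
    have hconst := constant_of_has_deriv_right_zero
      (f := fun s => ((∑ i, D s i) - 1) * Real.exp s) (a := 0) (b := t)
      (fun s hs => (((hWderiv s hs.1).sub_const 1).continuousAt.mul
        Real.continuous_exp.continuousAt).continuousWithinAt)
      (fun s hs => by
        have hd := ((hWderiv s hs.1).sub_const 1).mul (Real.hasDerivAt_exp s)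
        have : (1 - ∑ i, D s i) * Real.exp s + ((∑ i, D s i) - 1) * Real.exp s = 0 := by ring
        rw [this] at hd
        exact hd.hasDerivWithinAt)
      t (Set.right_mem_Icc.mpr ht)
    simp only [Real.exp_zero, mul_one] at hconst
    have he := Real.exp_pos t
    rw [Real.exp_neg]
    field_simp
    nlinarith [hconst]
  -- upper bound for the sum
  have hWle : ∀ t, 0 ≤ t → (∑ i, D t i) ≤ max (∑ i, D 0 i) 1 := by
    intro t ht
    rw [hWeq t ht]
    have h1 : Real.exp (-t) ≤ 1 := Real.exp_le_one_iff.mpr (neg_nonpos.mpr ht)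
    have h2 := Real.exp_pos (-t)
    rcases le_total (∑ i, D 0 i) 1 with h | h
    · have : 1 + ((∑ i, D 0 i) - 1) * Real.exp (-t) ≤ 1 := by nlinarith
      exact this.trans (le_max_right _ _)
    · have : 1 + ((∑ i, D 0 i) - 1) * Real.exp (-t) ≤ ∑ i, D 0 i := by nlinarith
      exact this.trans (le_max_left _ _)
  have hMpos : 0 < max (∑ i, D 0 i) 1 := lt_of_lt_of_le one_pos (le_max_right _ _)
  -- lower bound for Δ
  have hΔ : ∀ t, 0 ≤ t → L 0 / max (∑ i, D 0 i) 1 ≤ (∑ j, D t j / L j)⁻¹ := by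
    intro t ht
    have hsum : ∑ j, D t j / L j ≤ (∑ j, D t j) / L 0 := by
      rw [Finset.sum_div]
      apply Finset.sum_le_sum
      intro j _
      apply div_le_div_of_nonneg_left (hpos t ht j).le (hL 0)
      rcases eq_or_ne j 0 with rfl | hj
      · exact le_rfl
      · exact (hLmono (Fin.pos_of_ne_zero hj)).le
    calc L 0 / max (∑ i, D 0 i) 1
        ≤ L 0 / (∑ i, D t i) :=
          div_le_div_of_nonneg_left (hL 0).le (hWpos t ht) (hWle t ht)
      _ = ((∑ i, D t i) / L 0)⁻¹ := by rw [inv_div]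
      _ ≤ (∑ j, D t j / L j)⁻¹ := by
          apply inv_anti₀ (hSpos t ht) hsum
  -- Step 3 : ratios D t i / D t 0 decay to 0
  have hratio : ∀ i, i ≠ 0 → Tendsto (fun t => D t i / D t 0) atTop (nhds 0) := by
    intro i hi
    have hL0i : L 0 < L i := hLmono (Fin.pos_of_ne_zero hi)
    set c := L 0 / max (∑ i, D 0 i) 1 * (1 / L 0 - 1 / L i) with hcdef
    have hinv : 1 / L i < 1 / L 0 := one_div_lt_one_div_of_lt (hL 0) hL0i
    have hc : 0 < c :=
      mul_pos (div_pos (hL 0) hMpos) (sub_pos.mpr hinv)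
    have hrderiv : ∀ t, 0 ≤ t → HasDerivAt (fun s => D s i / D s 0)
        (D t i / D t 0 * ((∑ j, D t j / L j)⁻¹ * (1 / L i - 1 / L 0))) t := by
      intro t ht
      have hd := (hdyn t i ht).fun_div (hdyn t 0 ht) (hpos t ht 0).ne'
      refine hd.congr_deriv ?_
      have h0 := (hpos t ht 0).ne'
      have hLi := (hL i).ne'
      have hL0 := (hL 0).ne'
      have hS := (hSpos t ht).ne'
      field_simp
      ring
    -- antitonicity of r t * exp (c t)
    have hanti : ∀ t, 0 ≤ t → D t i / D t 0 * Real.exp (c * t) ≤ D 0 i / D 0 0 := by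
      intro t ht
      have hA : AntitoneOn (fun s => D s i / D s 0 * Real.exp (c * s)) (Set.Icc 0 t) := by
        apply antitoneOn_of_deriv_nonpos (convex_Icc 0 t)
        · intro s hs
          exact (((hcont i s hs.1).div (hcont 0 s hs.1) (hpos s hs.1 0).ne').mul
            (Real.continuous_exp.comp (continuous_const.mul continuous_id)).continuousAt).continuousWithinAt
        · intro s hs
          rw [interior_Icc] at hs
          have hde : HasDerivAt (fun y => Real.exp (c * y)) (Real.exp (c * s) * c) s := by
            simpa using ((hasDerivAt_id s).const_mul c).exp
          exact ((hrderiv s hs.1.le).mul hde).differentiableAt.differentiableWithinAt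
        · intro s hs
          rw [interior_Icc] at hs
          have hde : HasDerivAt (fun y => Real.exp (c * y)) (Real.exp (c * s) * c) s := by
            simpa using ((hasDerivAt_id s).const_mul c).exp
          have hd := (hrderiv s hs.1.le).fun_mul hde
          rw [hd.deriv]
          have hr : 0 ≤ D s i / D s 0 := div_nonneg (hpos s hs.1.le i).le (hpos s hs.1.le 0).le
          have hΔs := hΔ s hs.1.le
          have hkey : (∑ j, D s j / L j)⁻¹ * (1 / L i - 1 / L 0) + c ≤ 0 := by
            have := mul_le_mul_of_nonneg_right hΔs (sub_pos.mpr hinv).le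
            rw [hcdef]; nlinarith
          have hexp := Real.exp_pos (c * s)
          have : D s i / D s 0 * ((∑ j, D s j / L j)⁻¹ * (1 / L i - 1 / L 0)) * Real.exp (c * s)
              + D s i / D s 0 * (Real.exp (c * s) * c)
              = (D s i / D s 0) * Real.exp (c * s)
                * ((∑ j, D s j / L j)⁻¹ * (1 / L i - 1 / L 0) + c) := by ring
          rw [this]
          exact mul_nonpos_of_nonneg_of_nonpos (by positivity) hkey
      have := hA (Set.left_mem_Icc.mpr ht) (Set.right_mem_Icc.mpr ht) ht
      simpa using this
    have hub : ∀ t, 0 ≤ t → D t i / D t 0 ≤ D 0 i / D 0 0 * Real.exp (-(c * t)) := by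
      intro t ht
      have h := hanti t ht
      have he := Real.exp_pos (c * t)
      rw [Real.exp_neg, ← div_eq_mul_inv, le_div_iff₀ he]
      linarith
    have hub' : ∀ᶠ t in atTop, D t i / D t 0 ≤ D 0 i / D 0 0 * Real.exp (-(c * t)) :=
      (eventually_ge_atTop 0).mono hub
    have hlb : ∀ᶠ t in atTop, (0:ℝ) ≤ D t i / D t 0 :=
      (eventually_ge_atTop 0).mono fun t ht =>
        div_nonneg (hpos t ht i).le (hpos t ht 0).le
    have hexp0 : Tendsto (fun t : ℝ => D 0 i / D 0 0 * Real.exp (-(c * t))) atTop (nhds 0) := by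
      have h1 : Tendsto (fun t : ℝ => Real.exp (-(c * t))) atTop (nhds 0) :=
        Real.tendsto_exp_neg_atTop_nhds_zero.comp
          (Tendsto.const_mul_atTop hc tendsto_id)
      simpa using h1.const_mul (D 0 i / D 0 0)
    exact tendsto_of_tendsto_of_tendsto_of_le_of_le' tendsto_const_nhds hexp0 hlb hub'
  -- Step 4 : conclusions
  have hWtend : Tendsto (fun t => ∑ i, D t i) atTop (nhds 1) := by
    have h1 : Tendsto (fun t : ℝ => 1 + ((∑ i, D 0 i) - 1) * Real.exp (-t)) atTop (nhds 1) := by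
      have h2 : Tendsto (fun t : ℝ => Real.exp (-t)) atTop (nhds 0) :=
        Real.tendsto_exp_neg_atTop_nhds_zero
      have := (h2.const_mul ((∑ i, D 0 i) - 1)).const_add 1
      simpa using this
    apply h1.congr'
    filter_upwards [eventually_ge_atTop (0:ℝ)] with t ht
    exact (hWeq t ht).symm
  have hquot : Tendsto (fun t => (∑ i, D t i) / D t 0) atTop (nhds 1) := by
    have hsum : Tendsto (fun t => ∑ j, D t j / D t 0) atTop
        (nhds (∑ j : Fin (m+1), if j = 0 then (1:ℝ) else 0)) := by
      apply tendsto_finset_sum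
      intro j _
      by_cases hj : j = 0
      · subst hj
        simp only [if_pos rfl]
        apply Tendsto.congr' _ (tendsto_const_nhds (x := (1:ℝ)))
        filter_upwards [eventually_ge_atTop (0:ℝ)] with t ht
        exact (div_self (hpos t ht 0).ne').symm
      · simp only [if_neg hj]
        exact hratio j hj
    simp only [Finset.sum_ite_eq' Finset.univ (0 : Fin (m+1)), Finset.mem_univ, if_pos] at hsum
    apply hsum.congr'
    filter_upwards with t
    rw [Finset.sum_div]
  have hx : Tendsto (fun t => D t 0 / ∑ i, D t i) atTop (nhds 1) := by
    have h := hquot.inv₀ one_ne_zero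
    rw [inv_one] at h
    apply h.congr'
    filter_upwards with t
    rw [inv_div]
  refine ⟨hx, ?_, ?_⟩
  · have h := hx.mul hWtend
    rw [mul_one] at h
    apply h.congr'
    filter_upwards [eventually_ge_atTop (0:ℝ)] with t ht
    exact div_mul_cancel₀ (D t 0) (hWpos t ht).ne'
  · intro i hi
    have hD0tend : Tendsto (fun t => D t 0) atTop (nhds 1) := by
      have h := hx.mul hWtend
      rw [mul_one] at h
      apply h.congr'
      filter_upwards [eventually_ge_atTop (0:ℝ)] with t ht
      exact div_mul_cancel₀ (D t 0) (hWpos t ht).ne'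
    have h := (hratio i hi).mul hD0tend
    rw [zero_mul] at h
    apply h.congr'
    filter_upwards [eventually_ge_atTop (0:ℝ)] with t ht
    exact div_mul_cancel₀ (D t i) (hpos t ht 0).ne'
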